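/- Let f, g be homeomorphisms of a compact metric space M and π : M → M a continuous surjection with π ∘ g = f ∘ π, such that fibers have uniformly small diameter: sup_x diam(π^{−1}(x)) ≤ δ. If ν is a g-invariant ergodic Borel probability measure and h_top(g, π^{−1}(y)) ≤ c for all y ∈ M (entropy of g restricted to each fiber, in Bowen's sense), then h_ν(g) ≤ h_{π_*ν}(f) + c. -/

import Mathlib

open Set Filter MeasureTheory

/-- Dynamical ball `B_f(x, ε, n)`. -/
def dynBall {X : Type*} [MetricSpace X] (f : X → X) (x : X) (ε : ℝ) (n : ℕ) : Set X :=
  {y | ∀ k < n, dist (f^[k] y) (f^[k] x) < ε}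

/-- Infinite dynamical ball `B_f(x, ε, ∞)`. -/
def dynBallInf {X : Type*} [MetricSpace X] (f : X → X) (x : X) (ε : ℝ) : Set X :=
  {y | ∀ n : ℕ, dist (f^[n] y) (f^[n] x) < ε}

/-- Minimal number of `(ε,n)`-dynamical balls needed to cover `Y`. -/
noncomputable def covNum {X : Type*} [MetricSpace X] (f : X → X) (ε : ℝ) (n : ℕ)
    (Y : Set X) : ℕ∞ :=
  sInf {m : ℕ∞ | ∃ C : Finset X, (C.card : ℕ∞) = m ∧ Y ⊆ ⋃ x ∈ C, dynBall f x ε n}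

/-- `ε`-entropy of `f` on `Y`: `limsup (1/n) log r(ε, n, Y)`. -/
noncomputable def entSub {X : Type*} [MetricSpace X] (f : X → X) (ε : ℝ) (Y : Set X) :
    EReal :=
  Filter.limsup
    (fun n : ℕ => ((Real.log ((covNum f ε n Y).toNat) / (n : ℝ) : ℝ) : EReal))
    Filter.atTop

/-- Topological entropy of `f` on the subset `Y` (Bowen):
`h_top(f, Y) = lim_{ε→0} limsup (1/n) log r(ε, n, Y)`. -/
noncomputable def htopSub {X : Type*} [MetricSpace X] (f : X → X) (Y : Set X) : EReal :=
  ⨆ ε : {e : ℝ // 0 < e}, entSub f ε.1 Y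

/-- Misiurewicz local (tail) entropy `h_loc(f) = lim_{ε→0} sup_x h_top(f, B_f(x,ε,∞))`. -/
noncomputable def hloc {X : Type*} [MetricSpace X] (f : X → X) : EReal :=
  ⨅ ε : {e : ℝ // 0 < e}, ⨆ x : X, htopSub f (dynBallInf f x ε.1)

/-- Minimal number of `(ε,n)`-dynamical balls whose union has `µ`-measure at least `1/2`. -/
noncomputable def covNumMu {X : Type*} [MetricSpace X] [MeasurableSpace X]
    (f : X → X) (ε : ℝ) (n : ℕ) (μ : Measure X) : ℕ∞ :=
  sInf {m : ℕ∞ | ∃ C : Finset X, (C.card : ℕ∞) = m ∧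
    (1/2 : ENNReal) ≤ μ (⋃ x ∈ C, dynBall f x ε n)}

/-- Measure-theoretic entropy of an (ergodic) measure via Katok's formula, which
coincides with the Kolmogorov–Sinai entropy for ergodic measures. -/
noncomputable def measEnt {X : Type*} [MetricSpace X] [MeasurableSpace X]
    (f : X → X) (μ : Measure X) : EReal :=
  ⨆ ε : {e : ℝ // 0 < e},
    Filter.limsup
      (fun n : ℕ => ((Real.log ((covNumMu f ε.1 n μ).toNat) / (n : ℝ) : ℝ) : EReal))
      Filter.atTop



def tseq {M : Type*} (L : M → ℕ) (F : M → M) (y : M) : ℕ → ℕ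
  | 0 => 0
  | (j+1) => tseq L F y j + L (F^[tseq L F y j] y)

set_option maxHeartbeats 1000000

namespace LW

section basic
variable {X : Type*} [MetricSpace X] {f : X → X}

lemma isOpen_dynBall (hf : Continuous f) (x : X) (ε : ℝ) (n : ℕ) :
    IsOpen (dynBall f x ε n) := by
  have : dynBall f x ε n = ⋂ k ∈ Finset.range n, (fun y => dist (f^[k] y) (f^[k] x)) ⁻¹' Iio ε := by
    ext y; simp [dynBall]
  rw [this]
  exact isOpen_biInter_finset fun k _ =>
    (isOpen_Iio).preimage ((hf.iterate k).dist continuous_const)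

lemma mem_dynBall_self {x : X} {ε : ℝ} (hε : 0 < ε) (n : ℕ) : x ∈ dynBall f x ε n :=
  fun k _ => by simpa using hε

lemma covNum_le_card {ε : ℝ} {n : ℕ} {Y : Set X} (C : Finset X)
    (h : Y ⊆ ⋃ x ∈ C, dynBall f x ε n) : covNum f ε n Y ≤ C.card :=
  sInf_le ⟨C, rfl, h⟩

lemma covNum_exists {ε : ℝ} {n : ℕ} {Y : Set X} [CompactSpace X] (hf : Continuous f) (hε : 0 < ε) :
    ∃ C : Finset X, (C.card : ℕ∞) = covNum f ε n Y ∧ Y ⊆ ⋃ x ∈ C, dynBall f x ε n := by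
  have hne : {m : ℕ∞ | ∃ C : Finset X, (C.card : ℕ∞) = m ∧ Y ⊆ ⋃ x ∈ C, dynBall f x ε n}.Nonempty := by
    obtain ⟨s, hs⟩ := isCompact_univ.elim_finite_subcover
      (fun x : X => dynBall f x ε n) (fun x => isOpen_dynBall hf x ε n)
      (fun y _ => mem_iUnion.2 ⟨y, mem_dynBall_self hε n⟩)
    exact ⟨s.card, s, rfl, (subset_univ Y).trans hs⟩
  exact csInf_mem hne

lemma one_le_covNum_toNat {ε : ℝ} {n : ℕ} {Y : Set X} [CompactSpace X] (hf : Continuous f)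
    (hε : 0 < ε) (hY : Y.Nonempty) : 1 ≤ (covNum f ε n Y).toNat := by
  obtain ⟨C, hC1, hC2⟩ := covNum_exists (n := n) (Y := Y) hf hε
  rw [← hC1, ENat.toNat_coe]
  obtain ⟨z, hz⟩ := hY
  obtain ⟨x, hx, -⟩ := mem_iUnion₂.1 (hC2 hz)
  exact Finset.card_pos.2 ⟨x, hx⟩

end basic

section tseqsec
variable {M : Type*} (L : M → ℕ) (F : M → M) (y : M)

lemma tseq_mono : Monotone (tseq L F y) := by
  apply monotone_nat_of_le_succ
  intro j
  simp [tseq]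

lemma self_le_tseq (hL : ∀ w, 1 ≤ L w) : ∀ j, j ≤ tseq L F y j := by
  intro j
  induction j with
  | zero => simp [tseq]
  | succ j ih => have := hL (F^[tseq L F y j] y); simp [tseq]; omega

lemma tseq_sum : ∀ J, ∑ j ∈ Finset.range J, L (F^[tseq L F y j] y) = tseq L F y J := by
  intro J
  induction J with
  | zero => simp [tseq]
  | succ J ih => rw [Finset.sum_range_succ, ih]; rfl

lemma tseq_block (hL : ∀ w, 1 ≤ L w) (k : ℕ) :
    ∃ j, tseq L F y j ≤ k ∧ k < tseq L F y (j+1) := by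
  have hex : ∃ j, k < tseq L F y j := ⟨k + 1, lt_of_lt_of_le (Nat.lt_succ_self k) (self_le_tseq L F y hL (k+1))⟩
  set J := Nat.find hex with hJ
  have hJpos : J ≠ 0 := by
    intro h0
    have := Nat.find_spec hex
    rw [← hJ, h0] at this
    simp [tseq] at this
  obtain ⟨j, hj⟩ := Nat.exists_eq_succ_of_ne_zero hJpos
  have hspec := Nat.find_spec hex
  have hmin := Nat.find_min hex (show j < J by omega)
  rw [← hJ] at hspec
  refine ⟨j, by omega, by rw [show j + 1 = J by omega]; exact hspec⟩

end tseqsec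

lemma covNum_le_of_code {X : Type*} [MetricSpace X] [Nonempty X] {f : X → X} {ε : ℝ} {n : ℕ}
    {Y : Set X} {A : Type*} (s : Finset A) (cde : X → A)
    (hmem : ∀ z ∈ Y, cde z ∈ s)
    (h : ∀ z ∈ Y, ∀ z' ∈ Y, cde z = cde z' → z' ∈ dynBall f z ε n) :
    covNum f ε n Y ≤ s.card := by
  classical
  set rep : A → X := fun a => if h : ∃ z ∈ Y, cde z = a then h.choose else Classical.arbitrary X with hrep
  have hcov : Y ⊆ ⋃ x ∈ s.image rep, dynBall f x ε n := by
    intro z hz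
    have hex : ∃ z' ∈ Y, cde z' = cde z := ⟨z, hz, rfl⟩
    refine mem_iUnion₂.2 ⟨rep (cde z), Finset.mem_image_of_mem rep (hmem z hz), ?_⟩
    have h1 : rep (cde z) = hex.choose := by simp [hrep, hex]
    obtain ⟨hz'Y, hz'c⟩ := hex.choose_spec
    rw [h1]
    exact h _ hz'Y _ hz hz'c
  calc covNum f ε n Y ≤ ((s.image rep).card : ℕ∞) := covNum_le_card _ hcov
    _ ≤ s.card := by exact_mod_cast Nat.cast_le.2 (Finset.card_image_le)

/-- Bowen-style chaining estimate. -/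
lemma chain_covNum {M : Type*} [MetricSpace M] [Nonempty M]
    (g f π : M → M) (hsemi : ∀ x, π (g x) = f (π x))
    (ε ρ β : ℝ) (hβ : 0 ≤ β) (N : ℕ)
    (L : M → ℕ) (C : M → Finset M)
    (hL1 : ∀ w, 1 ≤ L w) (hLN : ∀ w, L w ≤ N)
    (hCcard : ∀ w, ((C w).card : ℝ) ≤ Real.exp (L w * β))
    (hCne : ∀ w, (C w).Nonempty)
    (hP : ∀ w z, dist (π z) w < ρ → ∃ x ∈ C w, z ∈ dynBall g x (ε/2) (L w)) (y : M) (n : ℕ) :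
    covNum g ε n (π ⁻¹' dynBall f y ρ n) ≤ (Nat.ceil (Real.exp ((n + N) * β)) : ℕ∞) := by
  classical
  have hsc : Function.Semiconj π g f := hsemi
  have hiter : ∀ (k : ℕ) (z : M), π (g^[k] z) = f^[k] (π z) := fun k z =>
    (hsc.iterate_right k) z
  set t : ℕ → ℕ := tseq L f y with ht
  set Y : Set M := π ⁻¹' dynBall f y ρ n with hY
  have hexJ : ∃ j, n ≤ t j := ⟨n, self_le_tseq L f y hL1 n⟩
  set J := Nat.find hexJ with hJdef
  have hJspec : n ≤ t J := Nat.find_spec hexJ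
  have hJmin : ∀ j < J, t j < n := fun j hj => lt_of_not_ge (Nat.find_min hexJ hj)
  have hkey : ∀ z ∈ Y, ∀ j < J,
      ∃ x ∈ C (f^[t j] y), g^[t j] z ∈ dynBall g x (ε/2) (L (f^[t j] y)) := by
    intro z hz j hj
    have htj : t j < n := hJmin j hj
    have hd : dist (π (g^[t j] z)) (f^[t j] y) < ρ := by
      rw [hiter]
      exact hz (t j) htj
    exact hP (f^[t j] y) (g^[t j] z) hd
  set cde : M → ((a : ℕ) → a ∈ Finset.range J → M) := fun z j _ =>
    if h : ∃ x ∈ C (f^[t j] y), g^[t j] z ∈ dynBall g x (ε/2) (L (f^[t j] y)) then h.choose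
    else (hCne (f^[t j] y)).choose with hcde
  set sFin : Finset ((a : ℕ) → a ∈ Finset.range J → M) :=
    (Finset.range J).pi (fun j => C (f^[t j] y)) with hsFin
  have hmem : ∀ z ∈ Y, cde z ∈ sFin := by
    intro z hz
    rw [hsFin, Finset.mem_pi]
    intro j hj
    by_cases h : ∃ x ∈ C (f^[t j] y), g^[t j] z ∈ dynBall g x (ε/2) (L (f^[t j] y))
    · have he : cde z j hj = h.choose := dif_pos h
      rw [he]; exact h.choose_spec.1
    · have he : cde z j hj = (hCne (f^[t j] y)).choose := dif_neg h
      rw [he]; exact (hCne _).choose_spec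
  have hcode : ∀ z ∈ Y, ∀ z' ∈ Y, cde z = cde z' → z' ∈ dynBall g z ε n := by
    intro z hz z' hz' he k hk
    obtain ⟨j, hj1, hj2⟩ := tseq_block L f y hL1 k
    rw [← ht] at hj1 hj2
    have hjJ : j < J := by
      by_contra hge
      have := tseq_mono L f y (le_of_not_gt hge)
      simp only [← ht] at this
      omega
    have hex := hkey z hz j hjJ
    have hex' := hkey z' hz' j hjJ
    have hval : cde z j (Finset.mem_range.2 hjJ) = hex.choose := dif_pos hex
    have hval' : cde z' j (Finset.mem_range.2 hjJ) = hex'.choose := dif_pos hex'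
    have heq : hex.choose = hex'.choose := by
      rw [← hval, ← hval', he]
    obtain ⟨hx1, hx2⟩ := hex.choose_spec
    obtain ⟨hx1', hx2'⟩ := hex'.choose_spec
    rw [← heq] at hx2'
    set x := hex.choose
    set sk := k - t j with hsk
    have hsklt : sk < L (f^[t j] y) := by
      have : t (j+1) = t j + L (f^[t j] y) := rfl
      omega
    have e1 : g^[k] z = g^[sk] (g^[t j] z) := by
      rw [← Function.iterate_add_apply]
      congr 1
      omega
    have e2 : g^[k] z' = g^[sk] (g^[t j] z') := by
      rw [← Function.iterate_add_apply]
      congr 1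
      omega
    have d1 : dist (g^[sk] (g^[t j] z)) (g^[sk] x) < ε/2 := hx2 sk hsklt
    have d2 : dist (g^[sk] (g^[t j] z')) (g^[sk] x) < ε/2 := hx2' sk hsklt
    rw [e1, e2]
    calc dist (g^[sk] (g^[t j] z')) (g^[sk] (g^[t j] z))
        ≤ dist (g^[sk] (g^[t j] z')) (g^[sk] x) + dist (g^[sk] x) (g^[sk] (g^[t j] z)) :=
          dist_triangle _ _ _
      _ < ε/2 + ε/2 := by rw [dist_comm (g^[sk] x)]; exact add_lt_add d2 d1
      _ = ε := by ring
  have hcov := covNum_le_of_code sFin cde hmem hcode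
  refine hcov.trans ?_
  rw [Nat.cast_le]
  have hcard : sFin.card = ∏ j ∈ Finset.range J, (C (f^[t j] y)).card := by
    rw [hsFin, Finset.card_pi]
  have htJ : t J ≤ n + N := by
    rcases Nat.eq_zero_or_pos J with h0 | hpos
    · rw [h0]; simp [ht, tseq]
    · obtain ⟨j, hj⟩ := Nat.exists_eq_succ_of_ne_zero (Nat.pos_iff_ne_zero.1 hpos)
      have h1 : t j < n := hJmin j (by omega)
      have h2 : t J = t j + L (f^[t j] y) := by rw [hj]; rfl
      have := hLN (f^[t j] y)
      omega
  have hreal : (sFin.card : ℝ) ≤ Real.exp ((n + N) * β) := by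
    rw [hcard]
    push_cast
    calc (∏ j ∈ Finset.range J, ((C (f^[t j] y)).card : ℝ))
        ≤ ∏ j ∈ Finset.range J, Real.exp ((L (f^[t j] y)) * β) :=
          Finset.prod_le_prod (fun j _ => by positivity) (fun j _ => hCcard _)
      _ = Real.exp (∑ j ∈ Finset.range J, (L (f^[t j] y) : ℝ) * β) := by
          rw [Real.exp_sum]
      _ ≤ Real.exp ((n + N) * β) := by
          apply Real.exp_le_exp.2
          rw [← Finset.sum_mul]
          apply mul_le_mul_of_nonneg_right _ hβ
          rw [show (∑ j ∈ Finset.range J, (L (f^[t j] y) : ℝ)) = ((∑ j ∈ Finset.range J, L (f^[t j] y) : ℕ) : ℝ) by push_cast; ring]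
          rw [tseq_sum L f y J, ← ht]
          exact_mod_cast htJ
  exact_mod_cast hreal.trans (Nat.le_ceil _)

end LW

namespace LW

section stepAB
variable {M : Type*} [MetricSpace M] [CompactSpace M]

lemma stepA (g : M → M) (hg : Continuous g) (Y : Set M) (hYne : Y.Nonempty)
    (c γ ε : ℝ) (hγ : 0 < γ) (hε : 0 < ε) (hY : entSub g (ε/2) Y ≤ (c : EReal)) :
    ∃ (m : ℕ) (C : Finset M), 1 ≤ m ∧ C.Nonempty ∧ ((C.card : ℝ) ≤ Real.exp (m * (c + γ))) ∧
      Y ⊆ ⋃ x ∈ C, dynBall g x (ε/2) m := by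
  have hlt : Filter.limsup
      (fun n : ℕ => ((Real.log ((covNum g (ε/2) n Y).toNat) / (n : ℝ) : ℝ) : EReal))
      Filter.atTop < ((c + γ : ℝ) : EReal) :=
    lt_of_le_of_lt hY (EReal.coe_lt_coe_iff.2 (lt_add_of_pos_right c hγ))
  have hev := Filter.eventually_lt_of_limsup_lt hlt
  obtain ⟨n, hnlt, hn1⟩ := (hev.and (Filter.eventually_ge_atTop 1)).exists
  obtain ⟨C, hCc, hCcov⟩ := covNum_exists (n := n) (Y := Y) hg (half_pos hε)
  have htn : (covNum g (ε/2) n Y).toNat = C.card := by rw [← hCc, ENat.toNat_coe]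
  have hCne : C.Nonempty := by
    obtain ⟨z, hz⟩ := hYne
    obtain ⟨x, hx, -⟩ := mem_iUnion₂.1 (hCcov hz)
    exact ⟨x, hx⟩
  have hcpos : (0 : ℝ) < C.card := by exact_mod_cast Finset.card_pos.2 hCne
  have hnpos : (0 : ℝ) < n := by exact_mod_cast hn1
  have hlog : Real.log C.card / n < c + γ := by
    rw [htn] at hnlt
    exact_mod_cast hnlt
  have hlog' : Real.log C.card < n * (c + γ) := by
    rw [div_lt_iff₀ hnpos] at hlog
    linarith [hlog]
  have hcard : (C.card : ℝ) ≤ Real.exp (n * (c + γ)) := by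
    calc (C.card : ℝ) = Real.exp (Real.log C.card) := (Real.exp_log hcpos).symm
      _ ≤ Real.exp (n * (c + γ)) := Real.exp_le_exp.2 hlog'.le
  exact ⟨n, C, hn1, hCne, hcard, hCcov⟩

lemma stepB (π : M → M) (hπc : Continuous π) (y : M) (U : Set M) (hU : IsOpen U)
    (hfib : π ⁻¹' {y} ⊆ U) : ∃ r, 0 < r ∧ π ⁻¹' (Metric.ball y r) ⊆ U := by
  have hK : IsCompact (π '' Uᶜ) := (hU.isClosed_compl.isCompact).image hπc
  have hyK : y ∈ (π '' Uᶜ)ᶜ := by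
    rintro ⟨z, hz, rfl⟩
    exact hz (hfib rfl)
  obtain ⟨r, hr, hball⟩ := Metric.isOpen_iff.1 hK.isClosed.isOpen_compl y hyK
  refine ⟨r, hr, fun z hz => ?_⟩
  by_contra hzU
  exact (hball hz) ⟨z, hzU, rfl⟩

lemma blockdata [Nonempty M] (g : M → M) (hg : Continuous g) (π : M → M) (hπc : Continuous π)
    (hπs : Function.Surjective π) (c γ ε : ℝ) (hγ : 0 < γ) (hε : 0 < ε)
    (hc : ∀ y : M, htopSub g (π ⁻¹' {y}) ≤ (c : EReal)) :
    ∃ (ρ : ℝ) (N : ℕ) (L : M → ℕ) (C : M → Finset M), 0 < ρ ∧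
      (∀ w, 1 ≤ L w) ∧ (∀ w, L w ≤ N) ∧
      (∀ w, ((C w).card : ℝ) ≤ Real.exp ((L w) * (c + γ))) ∧ (∀ w, (C w).Nonempty) ∧
      (∀ w z, dist (π z) w < ρ → ∃ x ∈ C w, z ∈ dynBall g x (ε/2) (L w)) := by
  classical
  have hA : ∀ y : M, ∃ (m : ℕ) (Cy : Finset M) (r : ℝ), 1 ≤ m ∧ Cy.Nonempty ∧
      ((Cy.card : ℝ) ≤ Real.exp (m * (c + γ))) ∧ 0 < r ∧
      π ⁻¹' (Metric.ball y r) ⊆ ⋃ x ∈ Cy, dynBall g x (ε/2) m := by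
    intro y
    have hfibne : (π ⁻¹' {y}).Nonempty := ⟨(hπs y).choose, (hπs y).choose_spec⟩
    have hent : entSub g (ε/2) (π ⁻¹' {y}) ≤ (c : EReal) :=
      le_trans (le_iSup (fun e : {e : ℝ // 0 < e} => entSub g e.1 (π ⁻¹' {y}))
        ⟨ε/2, half_pos hε⟩) (hc y)
    obtain ⟨m, Cy, hm, hCyne, hcard, hcov⟩ := stepA g hg _ hfibne c γ ε hγ hε hent
    obtain ⟨r, hr, hrsub⟩ := stepB π hπc y _
      (isOpen_biUnion fun x _ => isOpen_dynBall hg x (ε/2) m) hcov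
    exact ⟨m, Cy, r, hm, hCyne, hcard, hr, hrsub⟩
  choose m Cf r hm hCfne hcard hr hsub using hA
  obtain ⟨s, hs⟩ := isCompact_univ.elim_finite_subcover
    (fun y => Metric.ball y (r y / 2)) (fun y => Metric.isOpen_ball)
    (fun w _ => mem_iUnion.2 ⟨w, Metric.mem_ball_self (by linarith [hr w])⟩)
  have hsne : s.Nonempty := by
    obtain ⟨y0⟩ := (inferInstance : Nonempty M)
    obtain ⟨y, hy, -⟩ := mem_iUnion₂.1 (hs (mem_univ y0))
    exact ⟨y, hy⟩
  set ρ := s.inf' hsne (fun y => r y / 2) with hρdef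
  have hρpos : 0 < ρ := by
    rw [hρdef, Finset.lt_inf'_iff]
    intro y hy
    linarith [hr y]
  have hidx : ∀ w : M, ∃ y, y ∈ s ∧ dist w y < r y / 2 := by
    intro w
    obtain ⟨y, hy, hw⟩ := mem_iUnion₂.1 (hs (mem_univ w))
    exact ⟨y, hy, Metric.mem_ball.1 hw⟩
  choose idx hidxs hidxd using hidx
  refine ⟨ρ, s.sup m, fun w => m (idx w), fun w => Cf (idx w), hρpos,
    fun w => hm _, fun w => Finset.le_sup (hidxs w), fun w => hcard _, fun w => hCfne _, ?_⟩
  intro w z hd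
  have h1 : ρ ≤ r (idx w) / 2 := Finset.inf'_le _ (hidxs w)
  have h2 : dist (π z) (idx w) < r (idx w) := by
    have := dist_triangle (π z) w (idx w)
    have := hidxd w
    linarith
  have h3 := hsub (idx w) (Metric.mem_ball.2 h2)
  obtain ⟨x, hx, hzx⟩ := mem_iUnion₂.1 h3
  exact ⟨x, hx, hzx⟩

end stepAB

section mu
open MeasureTheory
variable {X : Type*} [MetricSpace X] [MeasurableSpace X] [BorelSpace X] {f : X → X}

lemma covNumMu_le_card {ε : ℝ} {n : ℕ} {μ : Measure X} (C : Finset X)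
    (h : (1/2 : ENNReal) ≤ μ (⋃ x ∈ C, dynBall f x ε n)) : covNumMu f ε n μ ≤ C.card :=
  sInf_le ⟨C, rfl, h⟩

lemma covNumMu_exists {ε : ℝ} {n : ℕ} {μ : Measure X} [CompactSpace X] [IsProbabilityMeasure μ]
    (hf : Continuous f) (hε : 0 < ε) :
    ∃ C : Finset X, (C.card : ℕ∞) = covNumMu f ε n μ ∧
      (1/2 : ENNReal) ≤ μ (⋃ x ∈ C, dynBall f x ε n) := by
  have hne : {m : ℕ∞ | ∃ C : Finset X, (C.card : ℕ∞) = m ∧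
      (1/2 : ENNReal) ≤ μ (⋃ x ∈ C, dynBall f x ε n)}.Nonempty := by
    obtain ⟨s, hs⟩ := isCompact_univ.elim_finite_subcover
      (fun x : X => dynBall f x ε n) (fun x => isOpen_dynBall hf x ε n)
      (fun y _ => mem_iUnion.2 ⟨y, mem_dynBall_self hε n⟩)
    refine ⟨s.card, s, rfl, ?_⟩
    have : μ (⋃ x ∈ s, dynBall f x ε n) = 1 := by
      refine le_antisymm prob_le_one ?_
      calc (1 : ENNReal) = μ univ := (measure_univ).symm
        _ ≤ μ (⋃ x ∈ s, dynBall f x ε n) := measure_mono hs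
    rw [this]
    exact ENNReal.half_le_self
  exact csInf_mem hne

lemma one_le_covNumMu {ε : ℝ} {n : ℕ} {μ : Measure X} [IsProbabilityMeasure μ] :
    1 ≤ covNumMu f ε n μ := by
  refine le_sInf fun mm hmm => ?_
  obtain ⟨C, hcard, hμ⟩ := hmm
  rcases C.eq_empty_or_nonempty with rfl | hCne
  · exfalso
    simp only [Finset.notMem_empty, iUnion_of_empty, iUnion_empty, measure_empty] at hμ
    norm_num at hμ
  · rw [← hcard]
    exact_mod_cast Nat.one_le_cast.2 (Finset.card_pos.2 hCne)

end mu

lemma ereal_le_of_forall_add {A B : EReal} (hB : 0 ≤ B)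
    (h : ∀ γ : ℝ, 0 < γ → A ≤ B + (γ : EReal)) : A ≤ B := by
  rcases eq_or_ne B ⊤ with rfl | hBt
  · exact le_top
  have hBb : B ≠ ⊥ := by
    rintro rfl
    exact absurd (le_bot_iff.1 hB) (by simp)
  have hBe : ((B.toReal : ℝ) : EReal) = B := EReal.coe_toReal hBt hBb
  set b := B.toReal
  rw [← hBe]
  rw [← hBe] at h
  induction A using EReal.rec with
  | bot => exact bot_le
  | coe a =>
    refine EReal.coe_le_coe_iff.2 (le_of_forall_pos_le_add fun γ hγ => ?_)
    have := h γ hγ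
    rw [← EReal.coe_add] at this
    exact_mod_cast this
  | top =>
    exfalso
    have := h 1 one_pos
    rw [← EReal.coe_add] at this
    exact EReal.coe_ne_top _ (top_le_iff.1 this)

end LW
/-- Ledrappier–Walters inequality for a factor map with small fibers: if
`π ∘ g = f ∘ π` with `π` a continuous surjection whose fibers have diameter at
most `δ`, and the topological entropy of `g` on each fiber is at most `c`, then
`h_ν(g) ≤ h_{π_*ν}(f) + c` for every ergodic `g`-invariant probability measure `ν`. -/
theorem ledrappier_walters_small_fibers {M : Type*} [MetricSpace M] [CompactSpace M]
    [MeasurableSpace M] [BorelSpace M]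
    (f g : M ≃ₜ M) (π : M → M) (hπc : Continuous π) (hπs : Function.Surjective π)
    (hsemi : ∀ x, π (g x) = f (π x))
    (δ : ℝ) (hδ : 0 ≤ δ) (hfib : ∀ y : M, Metric.diam (π ⁻¹' {y}) ≤ δ)
    (c : ℝ) (hc : ∀ y : M, htopSub (⇑g) (π ⁻¹' {y}) ≤ (c : EReal))
    (ν : Measure M) (hprob : IsProbabilityMeasure ν) (herg : Ergodic (⇑g) ν) :
    measEnt (⇑g) ν ≤ measEnt (⇑f) (ν.map π) + (c : EReal) := by
  classical
  have hMne : Nonempty M := by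
    rcases isEmpty_or_nonempty M with hM | hM
    · exfalso
      have h1 : ν univ = 1 := measure_univ
      rw [show (univ : Set M) = ∅ from Set.univ_eq_empty_iff.2 hM, measure_empty] at h1
      exact zero_ne_one h1
    · exact hM
  haveI := hMne
  haveI : IsProbabilityMeasure (ν.map π) :=
    MeasureTheory.Measure.isProbabilityMeasure_map hπc.measurable.aemeasurable
  have hfibne : ∀ y : M, (π ⁻¹' {y}).Nonempty := fun y => ⟨(hπs y).choose, (hπs y).choose_spec⟩
  -- c is nonnegative
  have hc0 : (0 : ℝ) ≤ c := by
    obtain ⟨y0⟩ := hMne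
    have h1 : (0 : EReal) ≤ entSub (⇑g) 1 (π ⁻¹' {y0}) := by
      refine Filter.le_limsup_of_frequently_le (Filter.Frequently.of_forall fun n => ?_)
      have h2 := LW.one_le_covNum_toNat (f := ⇑g) (ε := 1) (n := n) g.continuous one_pos (hfibne y0)
      have hlog : (0:ℝ) ≤ Real.log ((covNum (⇑g) 1 n (π ⁻¹' {y0})).toNat) / n :=
        div_nonneg (Real.log_nonneg (by exact_mod_cast h2)) (Nat.cast_nonneg n)
      exact_mod_cast hlog
    have h2 : (0 : EReal) ≤ (c : EReal) :=
      h1.trans (le_trans (le_iSup (fun e : {e : ℝ // 0 < e} =>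
        entSub (⇑g) e.1 (π ⁻¹' {y0})) ⟨1, one_pos⟩) (hc y0))
    exact_mod_cast h2
  -- measEnt of the factor is nonnegative
  have hnonneg : (0 : EReal) ≤ measEnt (⇑f) (ν.map π) := by
    refine le_trans ?_ (le_iSup (fun e : {e : ℝ // 0 < e} => Filter.limsup
      (fun n : ℕ => ((Real.log ((covNumMu (⇑f) e.1 n (ν.map π)).toNat) / (n : ℝ) : ℝ) : EReal))
      Filter.atTop) ⟨1, one_pos⟩)
    refine Filter.le_limsup_of_frequently_le (Filter.Frequently.of_forall fun n => ?_)
    obtain ⟨D, hD1, -⟩ := LW.covNumMu_exists (μ := ν.map π) (ε := 1) (n := n) f.continuous one_pos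
    have hne : covNumMu (⇑f) 1 n (ν.map π) ≠ ⊤ := by rw [← hD1]; exact ENat.coe_ne_top _
    have h1 : 1 ≤ (covNumMu (⇑f) 1 n (ν.map π)).toNat := by
      have h3 := LW.one_le_covNumMu (f := ⇑f) (ε := 1) (n := n) (μ := ν.map π)
      rw [← ENat.coe_toNat hne] at h3
      exact_mod_cast h3
    have hlog : (0:ℝ) ≤ Real.log ((covNumMu (⇑f) 1 n (ν.map π)).toNat) / n :=
      div_nonneg (Real.log_nonneg (by exact_mod_cast h1)) (Nat.cast_nonneg n)
    exact_mod_cast hlog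
  set B : EReal := measEnt (⇑f) (ν.map π) + (c : EReal) with hBdef
  have hB0 : (0 : EReal) ≤ B := by
    calc (0 : EReal) = 0 + 0 := (add_zero 0).symm
      _ ≤ measEnt (⇑f) (ν.map π) + (c : EReal) :=
          add_le_add hnonneg (by exact_mod_cast hc0)
  -- key estimate
  have key : ∀ ε : ℝ, 0 < ε → ∀ γ : ℝ, 0 < γ →
      Filter.limsup (fun n : ℕ =>
        ((Real.log ((covNumMu (⇑g) ε n ν).toNat) / (n : ℝ) : ℝ) : EReal)) Filter.atTop
        ≤ measEnt (⇑f) (ν.map π) + ((c + γ : ℝ) : EReal) := by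
    intro ε hε γ hγ
    have hβ : 0 ≤ c + γ := by linarith
    obtain ⟨ρ, N, L, CC, hρ, hL1, hLN, hCcard, hCne, hP⟩ :=
      LW.blockdata (⇑g) g.continuous π hπc hπs c γ ε hγ hε hc
    have hchain := LW.chain_covNum (⇑g) (⇑f) π hsemi ε ρ (c + γ) hβ N L CC hL1 hLN hCcard hCne hP
    have hcomp : ∀ n : ℕ, covNumMu (⇑g) ε n ν ≤
        (((covNumMu (⇑f) ρ n (ν.map π)).toNat * Nat.ceil (Real.exp (((n : ℝ) + N) * (c + γ))) : ℕ) : ℕ∞) := by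
      intro n
      obtain ⟨D, hD1, hD2⟩ := LW.covNumMu_exists (μ := ν.map π) (n := n) f.continuous hρ
      have hcy : ∀ y : M, ∃ Cy : Finset M,
          (Cy.card : ℕ∞) = covNum (⇑g) ε n (π ⁻¹' dynBall (⇑f) y ρ n) ∧
          π ⁻¹' dynBall (⇑f) y ρ n ⊆ ⋃ x ∈ Cy, dynBall (⇑g) x ε n :=
        fun y => LW.covNum_exists g.continuous hε
      choose CY hCY1 hCY2 using hcy
      have hCYcard : ∀ y, (CY y).card ≤ Nat.ceil (Real.exp (((n : ℝ) + N) * (c + γ))) := by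
        intro y
        have h := hchain y n
        rw [← hCY1 y] at h
        exact_mod_cast h
      set Cstar := D.biUnion CY with hCstar
      have hsub : π ⁻¹' (⋃ y ∈ D, dynBall (⇑f) y ρ n) ⊆ ⋃ x ∈ Cstar, dynBall (⇑g) x ε n := by
        intro z hz
        obtain ⟨y, hyD, hzy⟩ : ∃ y ∈ D, π z ∈ dynBall (⇑f) y ρ n := by
          simpa using hz
        obtain ⟨x, hx, hzx⟩ := mem_iUnion₂.1 (hCY2 y hzy)
        exact mem_iUnion₂.2 ⟨x, Finset.mem_biUnion.2 ⟨y, hyD, hx⟩, hzx⟩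
      have hmeas : MeasurableSet (⋃ y ∈ D, dynBall (⇑f) y ρ n) :=
        (isOpen_biUnion fun y _ => LW.isOpen_dynBall f.continuous y ρ n).measurableSet
      have hhalf : (1/2 : ENNReal) ≤ ν (⋃ x ∈ Cstar, dynBall (⇑g) x ε n) := by
        calc (1/2 : ENNReal) ≤ (ν.map π) (⋃ y ∈ D, dynBall (⇑f) y ρ n) := hD2
          _ = ν (π ⁻¹' (⋃ y ∈ D, dynBall (⇑f) y ρ n)) :=
              MeasureTheory.Measure.map_apply hπc.measurable hmeas
          _ ≤ ν (⋃ x ∈ Cstar, dynBall (⇑g) x ε n) := measure_mono hsub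
      have hle1 : covNumMu (⇑g) ε n ν ≤ (Cstar.card : ℕ∞) := LW.covNumMu_le_card Cstar hhalf
      have hle2 : Cstar.card ≤ D.card * Nat.ceil (Real.exp (((n : ℝ) + N) * (c + γ))) := by
        calc Cstar.card ≤ ∑ y ∈ D, (CY y).card := Finset.card_biUnion_le
          _ ≤ ∑ _y ∈ D, Nat.ceil (Real.exp (((n : ℝ) + N) * (c + γ))) :=
              Finset.sum_le_sum fun y _ => hCYcard y
          _ = D.card * Nat.ceil (Real.exp (((n : ℝ) + N) * (c + γ))) := by
              rw [Finset.sum_const, smul_eq_mul]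
      have hDcard : D.card = (covNumMu (⇑f) ρ n (ν.map π)).toNat := by
        rw [← hD1, ENat.toNat_coe]
      refine hle1.trans ?_
      rw [← hDcard]
      exact_mod_cast Nat.cast_le.2 hle2
    -- arithmetic with logarithms
    have hgne : ∀ n, covNumMu (⇑g) ε n ν ≠ ⊤ := fun n =>
      ne_top_of_le_ne_top (ENat.coe_ne_top _) (hcomp n)
    have haK : ∀ n : ℕ, (covNumMu (⇑g) ε n ν).toNat ≤
        (covNumMu (⇑f) ρ n (ν.map π)).toNat * Nat.ceil (Real.exp (((n : ℝ) + N) * (c + γ))) := by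
      intro n
      have h := hcomp n
      rw [← ENat.coe_toNat (hgne n)] at h
      exact_mod_cast h
    have ha1 : ∀ n : ℕ, 1 ≤ (covNumMu (⇑g) ε n ν).toNat := by
      intro n
      have h3 := LW.one_le_covNumMu (f := ⇑g) (ε := ε) (n := n) (μ := ν)
      rw [← ENat.coe_toNat (hgne n)] at h3
      exact_mod_cast h3
    have hR1 : ∀ n : ℕ, 1 ≤ (covNumMu (⇑f) ρ n (ν.map π)).toNat := by
      intro n
      obtain ⟨D, hD1, -⟩ := LW.covNumMu_exists (μ := ν.map π) (n := n) f.continuous hρ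
      have hne : covNumMu (⇑f) ρ n (ν.map π) ≠ ⊤ := by rw [← hD1]; exact ENat.coe_ne_top _
      have h3 := LW.one_le_covNumMu (f := ⇑f) (ε := ρ) (n := n) (μ := ν.map π)
      rw [← ENat.coe_toNat hne] at h3
      exact_mod_cast h3
    have hK1 : ∀ n : ℕ, 1 ≤ Nat.ceil (Real.exp (((n : ℝ) + N) * (c + γ))) := fun n =>
      Nat.one_le_ceil_iff.2 (Real.exp_pos _)
    set V : ℕ → ℝ := fun n => Real.log ((covNumMu (⇑f) ρ n (ν.map π)).toNat) / n with hV
    set W : ℕ → ℝ := fun n => (((n : ℝ) + N) * (c + γ) + Real.log 2) / n with hW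
    have hpt : ∀ n : ℕ, 1 ≤ n →
        Real.log ((covNumMu (⇑g) ε n ν).toNat) / n ≤ V n + W n := by
      intro n hn
      have hnpos : (0:ℝ) < n := by exact_mod_cast hn
      have hapos : (0:ℝ) < (((covNumMu (⇑g) ε n ν).toNat : ℕ) : ℝ) := by exact_mod_cast ha1 n
      have hRpos : (0:ℝ) < (((covNumMu (⇑f) ρ n (ν.map π)).toNat : ℕ) : ℝ) := by
        exact_mod_cast hR1 n
      have hKpos : (0:ℝ) < ((Nat.ceil (Real.exp (((n : ℝ) + N) * (c + γ))) : ℕ) : ℝ) := by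
        exact_mod_cast hK1 n
      have l1 : Real.log ((covNumMu (⇑g) ε n ν).toNat) ≤
          Real.log ((((covNumMu (⇑f) ρ n (ν.map π)).toNat : ℕ) : ℝ) *
            ((Nat.ceil (Real.exp (((n : ℝ) + N) * (c + γ))) : ℕ) : ℝ)) := by
        apply Real.log_le_log hapos
        exact_mod_cast haK n
      have l2 : Real.log ((((covNumMu (⇑f) ρ n (ν.map π)).toNat : ℕ) : ℝ) *
            ((Nat.ceil (Real.exp (((n : ℝ) + N) * (c + γ))) : ℕ) : ℝ)) =
          Real.log ((covNumMu (⇑f) ρ n (ν.map π)).toNat) +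
            Real.log (Nat.ceil (Real.exp (((n : ℝ) + N) * (c + γ)))) :=
        Real.log_mul (ne_of_gt hRpos) (ne_of_gt hKpos)
      have l3 : Real.log ((Nat.ceil (Real.exp (((n : ℝ) + N) * (c + γ))) : ℕ)) ≤
          ((n : ℝ) + N) * (c + γ) + Real.log 2 := by
        have hE1 : (1:ℝ) ≤ Real.exp (((n : ℝ) + N) * (c + γ)) := by
          rw [← Real.exp_zero]
          exact Real.exp_le_exp.2 (by positivity)
        have hceil : ((Nat.ceil (Real.exp (((n : ℝ) + N) * (c + γ))) : ℕ) : ℝ) <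
            Real.exp (((n : ℝ) + N) * (c + γ)) + 1 :=
          Nat.ceil_lt_add_one (by positivity)
        have hKle : ((Nat.ceil (Real.exp (((n : ℝ) + N) * (c + γ))) : ℕ) : ℝ) ≤
            2 * Real.exp (((n : ℝ) + N) * (c + γ)) := by linarith
        calc Real.log ((Nat.ceil (Real.exp (((n : ℝ) + N) * (c + γ))) : ℕ))
            ≤ Real.log (2 * Real.exp (((n : ℝ) + N) * (c + γ))) := Real.log_le_log hKpos hKle
          _ = Real.log 2 + (((n : ℝ) + N) * (c + γ)) := by
              rw [Real.log_mul two_ne_zero (Real.exp_ne_zero _), Real.log_exp]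
          _ = ((n : ℝ) + N) * (c + γ) + Real.log 2 := by ring
      have lsum : Real.log ((covNumMu (⇑g) ε n ν).toNat) ≤
          Real.log ((covNumMu (⇑f) ρ n (ν.map π)).toNat) +
            (((n : ℝ) + N) * (c + γ) + Real.log 2) := by
        rw [l2] at l1
        linarith
      rw [hV, hW]
      rw [← add_div]
      exact div_le_div_of_nonneg_right lsum hnpos.le
    -- pass to EReal limsup
    have hev : ∀ᶠ n : ℕ in Filter.atTop,
        ((Real.log ((covNumMu (⇑g) ε n ν).toNat) / (n : ℝ) : ℝ) : EReal) ≤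
          (fun n : ℕ => ((V n : ℝ) : EReal) + ((W n : ℝ) : EReal)) n := by
      filter_upwards [Filter.eventually_ge_atTop 1] with n hn
      have h := hpt n hn
      rw [← EReal.coe_add]
      exact_mod_cast h
    have hlim1 := Filter.limsup_le_limsup hev
    have hWlim : Filter.Tendsto (fun n : ℕ => ((W n : ℝ) : EReal)) Filter.atTop
        (nhds (((c + γ : ℝ)) : EReal)) := by
      rw [EReal.tendsto_coe]
      have h1 : Filter.Tendsto (fun n : ℕ => (c + γ) + ((N : ℝ) * (c + γ) + Real.log 2) * (1/(n:ℝ)))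
          Filter.atTop (nhds ((c + γ) + ((N : ℝ) * (c + γ) + Real.log 2) * 0)) :=
        tendsto_const_nhds.add (tendsto_const_nhds.mul tendsto_one_div_atTop_nhds_zero_nat)
      rw [mul_zero, add_zero] at h1
      refine h1.congr' ?_
      filter_upwards [Filter.eventually_ge_atTop 1] with n hn
      have hnpos : (0:ℝ) < n := by exact_mod_cast hn
      rw [hW]
      field_simp
      ring
    have hWlimsup : Filter.limsup (fun n : ℕ => ((W n : ℝ) : EReal)) Filter.atTop
        = (((c + γ : ℝ)) : EReal) := hWlim.limsup_eq
    have hVnn : (0 : EReal) ≤ Filter.limsup (fun n : ℕ => ((V n : ℝ) : EReal)) Filter.atTop := by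
      refine Filter.le_limsup_of_frequently_le (Filter.Frequently.of_forall fun n => ?_)
      have : (0:ℝ) ≤ V n := div_nonneg (Real.log_nonneg (by exact_mod_cast hR1 n)) (Nat.cast_nonneg n)
      exact_mod_cast this
    have hVne : Filter.limsup (fun n : ℕ => ((V n : ℝ) : EReal)) Filter.atTop ≠ ⊥ :=
      (lt_of_lt_of_le EReal.bot_lt_zero hVnn).ne'
    have hadd : Filter.limsup (fun n : ℕ => ((V n : ℝ) : EReal) + ((W n : ℝ) : EReal)) Filter.atTop ≤
        Filter.limsup (fun n : ℕ => ((V n : ℝ) : EReal)) Filter.atTop +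
          Filter.limsup (fun n : ℕ => ((W n : ℝ) : EReal)) Filter.atTop :=
      EReal.limsup_add_le (Or.inl hVne) (Or.inr (by rw [hWlimsup]; exact EReal.coe_ne_bot _))
    have hVle : Filter.limsup (fun n : ℕ => ((V n : ℝ) : EReal)) Filter.atTop ≤
        measEnt (⇑f) (ν.map π) := by
      refine le_iSup_of_le ⟨ρ, hρ⟩ ?_
      exact le_of_eq rfl
    calc Filter.limsup (fun n : ℕ =>
          ((Real.log ((covNumMu (⇑g) ε n ν).toNat) / (n : ℝ) : ℝ) : EReal)) Filter.atTop
        ≤ Filter.limsup (fun n : ℕ => ((V n : ℝ) : EReal) + ((W n : ℝ) : EReal)) Filter.atTop := hlim1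
      _ ≤ Filter.limsup (fun n : ℕ => ((V n : ℝ) : EReal)) Filter.atTop +
          Filter.limsup (fun n : ℕ => ((W n : ℝ) : EReal)) Filter.atTop := hadd
      _ = Filter.limsup (fun n : ℕ => ((V n : ℝ) : EReal)) Filter.atTop + ((c + γ : ℝ) : EReal) := by
          rw [hWlimsup]
      _ ≤ measEnt (⇑f) (ν.map π) + ((c + γ : ℝ) : EReal) := add_le_add_left hVle _
  -- conclude
  have main : ∀ e : {e : ℝ // 0 < e},
      Filter.limsup (fun n : ℕ =>
        ((Real.log ((covNumMu (⇑g) e.1 n ν).toNat) / (n : ℝ) : ℝ) : EReal)) Filter.atTop ≤ B := by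
    intro e
    refine LW.ereal_le_of_forall_add hB0 ?_
    intro γ hγ
    calc Filter.limsup (fun n : ℕ =>
          ((Real.log ((covNumMu (⇑g) e.1 n ν).toNat) / (n : ℝ) : ℝ) : EReal)) Filter.atTop
        ≤ measEnt (⇑f) (ν.map π) + ((c + γ : ℝ) : EReal) := key e.1 e.2 γ hγ
      _ = B + (γ : EReal) := by rw [hBdef, EReal.coe_add, ← add_assoc]
  exact iSup_le main
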